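/- Let α < N, 0 < σ < N, b > 0 and θ ∈ ℝ. Let ω be a Borel measure on Ω for which there exist c₁, c₂ > 0 with c₁ · max{d(x), s}^b · max{d_Σ(x), s}^θ · s^N ≤ ω(B(x,s) ∩ Ω) ≤ c₂ · max{d(x), s}^b · max{d_Σ(x), s}^θ · s^N for all x ∈ Ω and 0 < s ≤ 4 diam(Ω). Set M := (4 diam(Ω))^{N−α}. Then there exist constants C', C'' > 0, depending only on N, α, σ, b, θ, c₁, c₂ and Ω, such that for every x ∈ Ω and s > 0: (i) if s ≤ d(x)^N d_Σ(x)^{−α}, then C' ≤ ω(𝔅(x,s)) / ( d(x)^{b − σN/(N−σ)} d_Σ(x)^{θ + αN/(N−σ)} s^{N/(N−σ)} ) ≤ C''; (ii) if d(x)^N d_Σ(x)^{−α} < s ≤ d_Σ(x)^{N−α}, then C' ≤ ω(𝔅(x,s)) / ( s^{(b+N)/N} d_Σ(x)^{θ + α(b+N)/N} ) ≤ C''; (iii) if d_Σ(x)^{N−α} ≤ s ≤ M, then C' ≤ ω(𝔅(x,s)) / s^{(b+θ+N)/(N−α)} ≤ C''; (iv) if s ≥ M, then C' ≤ ω(𝔅(x,s))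 / M^{(b+θ+N)/(N−α)} ≤ C''. -/

import Mathlib

open MeasureTheory Set Metric

private lemma max_cross' {r1 r2 d e : ℝ} (hd : 0 ≤ d) (hde : d ≤ e) (h12 : r1 ≤ r2) :
    max r2 e * max r1 d ≤ max r2 d * max r1 e := by
  have he : 0 ≤ e := hd.trans hde
  rcases le_total r2 e with h | h
  · rw [max_eq_right h, max_eq_right (h12.trans h)]
    calc e * max r1 d = max r1 d * e := mul_comm _ _
    _ ≤ max r2 d * e := mul_le_mul_of_nonneg_right (max_le_max h12 le_rfl) he
  · rw [max_eq_left h, max_eq_left (hde.trans h)]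
    exact mul_le_mul_of_nonneg_left (max_le_max le_rfl hde) (he.trans h)

private lemma bracket_rpow_le {u m K : ℝ} (γ : ℝ) (hu : 0 < u) (hK : 1 ≤ K)
    (h1 : u ≤ m) (h2 : m ≤ K * u) : m ^ γ ≤ K ^ |γ| * u ^ γ := by
  have hK0 : (0:ℝ) < K := lt_of_lt_of_le one_pos hK
  rcases le_or_gt 0 γ with hγ | hγ
  · rw [abs_of_nonneg hγ]
    calc m ^ γ ≤ (K * u) ^ γ := Real.rpow_le_rpow (hu.le.trans h1) h2 hγ
    _ = K ^ γ * u ^ γ := Real.mul_rpow hK0.le hu.le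
  · rw [abs_of_neg hγ]
    have h3 : m ^ γ ≤ u ^ γ := Real.rpow_le_rpow_of_nonpos hu h1 hγ.le
    have h4 : (1:ℝ) ≤ K ^ (-γ) := Real.one_le_rpow hK (by linarith)
    nlinarith [Real.rpow_pos_of_pos hu γ]

private lemma le_bracket_rpow {u m K : ℝ} (γ : ℝ) (hu : 0 < u) (hK : 1 ≤ K)
    (h1 : u ≤ m) (h2 : m ≤ K * u) : K ^ (-|γ|) * u ^ γ ≤ m ^ γ := by
  have hK0 : (0:ℝ) < K := lt_of_lt_of_le one_pos hK
  rcases le_or_gt 0 γ with hγ | hγ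
  · have h3 : u ^ γ ≤ m ^ γ := Real.rpow_le_rpow hu.le h1 hγ
    have h4 : K ^ (-|γ|) ≤ 1 :=
      Real.rpow_le_one_of_one_le_of_nonpos hK (neg_nonpos.2 (abs_nonneg γ))
    nlinarith [Real.rpow_pos_of_pos hu γ]
  · rw [abs_of_neg hγ, neg_neg]
    calc K ^ γ * u ^ γ = (K * u) ^ γ := (Real.mul_rpow hK0.le hu.le).symm
    _ ≤ m ^ γ := Real.rpow_le_rpow_of_nonpos (lt_of_lt_of_le hu h1) h2 hγ.le

private lemma Fcore {n σ α w u v κ : ℝ} (hσ0 : 0 ≤ σ)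
    (hv0 : 0 ≤ v) (hvu : v ≤ u) (huw : u ≤ w)
    (hκ1 : κ ≤ n - σ) (hκ2 : κ ≤ n - α) :
    κ * w ≤ (n - σ) * w + σ * u - α * v := by
  rcases le_total α σ with h | h
  · nlinarith [mul_le_mul_of_nonneg_left hvu hσ0, mul_nonneg (sub_nonneg.2 h) hv0]
  · nlinarith [mul_le_mul_of_nonneg_left hvu hσ0,
      mul_le_mul_of_nonpos_left (le_trans hvu huw) (sub_nonpos.2 h)]

private lemma Fgrow {n σ α d e : ℝ} (hσ0 : 0 < σ) (hσ : σ < n) (hα : α < n)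
    (hd : 0 < d) (hde : d ≤ e) {r L : ℝ} (hr : 0 < r) (hL : 1 ≤ L) :
    L ^ min (n - σ) (n - α) * (r ^ (n - σ) * max r d ^ σ / max r e ^ α)
      ≤ (L * r) ^ (n - σ) * max (L * r) d ^ σ / max (L * r) e ^ α := by
  have hL0 : (0:ℝ) < L := lt_of_lt_of_le one_pos hL
  have he : 0 < e := hd.trans_le hde
  have hmrd : 0 < max r d := lt_max_of_lt_right hd
  have hmre : 0 < max r e := lt_max_of_lt_right he
  have hLr : 0 < L * r := mul_pos hL0 hr
  have hmLd : 0 < max (L * r) d := lt_max_of_lt_right hd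
  have hmLe : 0 < max (L * r) e := lt_max_of_lt_right he
  have hrLr : r ≤ L * r := le_mul_of_one_le_left hr.le hL
  have hmono_e : max r e ≤ max (L * r) e := max_le_max hrLr le_rfl
  have hLd : max (L * r) d ≤ L * max r d := by
    apply max_le (mul_le_mul_of_nonneg_left (le_max_left _ _) hL0.le)
    exact (le_max_right _ _).trans (le_mul_of_one_le_left hmrd.le hL)
  have hcross : max (L * r) e * max r d ≤ max (L * r) d * max r e :=
    max_cross' hd.le hde hrLr
  set κ := min (n - σ) (n - α) with hκ
  have hP : (0:ℝ) < L ^ κ * (r ^ (n - σ) * max r d ^ σ / max r e ^ α) := by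
    have := Real.rpow_pos_of_pos hL0 κ
    have := Real.rpow_pos_of_pos hr (n - σ)
    have := Real.rpow_pos_of_pos hmrd σ
    have := Real.rpow_pos_of_pos hmre α
    positivity
  have hQ : (0:ℝ) < (L * r) ^ (n - σ) * max (L * r) d ^ σ / max (L * r) e ^ α := by
    have := Real.rpow_pos_of_pos hLr (n - σ)
    have := Real.rpow_pos_of_pos hmLd σ
    have := Real.rpow_pos_of_pos hmLe α
    positivity
  rw [← Real.exp_log hP, ← Real.exp_log hQ]
  apply Real.exp_le_exp.2
  have e1 : Real.log (L ^ κ * (r ^ (n - σ) * max r d ^ σ / max r e ^ α))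
      = κ * Real.log L + ((n - σ) * Real.log r + σ * Real.log (max r d)
        - α * Real.log (max r e)) := by
    rw [Real.log_mul (ne_of_gt (Real.rpow_pos_of_pos hL0 κ)) (ne_of_gt (by
          have := Real.rpow_pos_of_pos hr (n - σ)
          have := Real.rpow_pos_of_pos hmrd σ
          have := Real.rpow_pos_of_pos hmre α
          positivity)),
      Real.log_div (by positivity) (ne_of_gt (Real.rpow_pos_of_pos hmre α)),
      Real.log_mul (ne_of_gt (Real.rpow_pos_of_pos hr _)) (ne_of_gt (Real.rpow_pos_of_pos hmrd _)),
      Real.log_rpow hL0, Real.log_rpow hr, Real.log_rpow hmrd, Real.log_rpow hmre]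
    all_goals ring
  have e2 : Real.log ((L * r) ^ (n - σ) * max (L * r) d ^ σ / max (L * r) e ^ α)
      = (n - σ) * (Real.log L + Real.log r) + σ * Real.log (max (L * r) d)
        - α * Real.log (max (L * r) e) := by
    rw [Real.log_div (by positivity) (ne_of_gt (Real.rpow_pos_of_pos hmLe α)),
      Real.log_mul (ne_of_gt (Real.rpow_pos_of_pos hLr _)) (ne_of_gt (Real.rpow_pos_of_pos hmLd _)),
      Real.log_rpow hLr, Real.log_rpow hmLd, Real.log_rpow hmLe,
      Real.log_mul (ne_of_gt hL0) (ne_of_gt hr)]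
    all_goals ring
  rw [e1, e2]
  have hv0 : 0 ≤ Real.log (max (L * r) e) - Real.log (max r e) := by
    have := (Real.log_le_log_iff hmre hmLe).2 hmono_e; linarith
  have hvu : Real.log (max (L * r) e) - Real.log (max r e)
      ≤ Real.log (max (L * r) d) - Real.log (max r d) := by
    have h1 := (Real.log_le_log_iff (mul_pos hmLe hmrd) (mul_pos hmLd hmre)).2 hcross
    rw [Real.log_mul (ne_of_gt hmLe) (ne_of_gt hmrd),
      Real.log_mul (ne_of_gt hmLd) (ne_of_gt hmre)] at h1
    linarith
  have huw : Real.log (max (L * r) d) - Real.log (max r d) ≤ Real.log L := by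
    have h1 := (Real.log_le_log_iff hmLd (mul_pos hL0 hmrd)).2 hLd
    rw [Real.log_mul (ne_of_gt hL0) (ne_of_gt hmrd)] at h1
    linarith
  have := Fcore (n := n) (α := α) hσ0.le hv0 hvu huw (min_le_left _ _) (min_le_right _ _)
  linarith

private lemma Fmono {n σ α d e : ℝ} (hσ0 : 0 < σ) (hσ : σ < n) (hα : α < n)
    (hd : 0 < d) (hde : d ≤ e) :
    StrictMonoOn (fun r : ℝ => r ^ (n - σ) * max r d ^ σ / max r e ^ α) (Ici 0) := by
  have he : 0 < e := hd.trans_le hde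
  intro r1 h1 r2 h2 h12
  simp only
  have hr2 : 0 < r2 := lt_of_le_of_lt h1 h12
  have hF2 : 0 < r2 ^ (n - σ) * max r2 d ^ σ / max r2 e ^ α := by
    have := Real.rpow_pos_of_pos hr2 (n - σ)
    have := Real.rpow_pos_of_pos (lt_max_of_lt_right hd : 0 < max r2 d) σ
    have := Real.rpow_pos_of_pos (lt_max_of_lt_right he : 0 < max r2 e) α
    positivity
  rcases eq_or_lt_of_le (mem_Ici.1 h1 : (0:ℝ) ≤ r1) with h0 | hr1
  · rw [← h0]
    rw [Real.zero_rpow (sub_ne_zero.2 (ne_of_gt hσ)), zero_mul, zero_div]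
    exact hF2
  · have hL : 1 < r2 / r1 := (one_lt_div hr1).2 h12
    have hgrow := Fgrow hσ0 hσ hα hd hde hr1 hL.le
    rw [div_mul_cancel₀ _ (ne_of_gt hr1)] at hgrow
    have hκ : 0 < min (n - σ) (n - α) := lt_min (by linarith) (by linarith)
    have h1lt : 1 < (r2 / r1) ^ min (n - σ) (n - α) :=
      (Real.one_lt_rpow_iff_of_pos (by positivity)).2 (Or.inl ⟨hL, hκ⟩)
    have hF1 : 0 < r1 ^ (n - σ) * max r1 d ^ σ / max r1 e ^ α := by
      have := Real.rpow_pos_of_pos hr1 (n - σ)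
      have := Real.rpow_pos_of_pos (lt_max_of_lt_right hd : 0 < max r1 d) σ
      have := Real.rpow_pos_of_pos (lt_max_of_lt_right he : 0 < max r1 e) α
      positivity
    nlinarith


/-- The kernel `𝒩_{α,σ}(x,y) = max{|x−y|, d_Σ(x), d_Σ(y)}^α /
(|x−y|^{N−σ} · max{|x−y|, d(x), d(y)}^σ)`. -/
noncomputable def NKernel (N : ℕ) (α σ : ℝ) (Ω S : Set (EuclideanSpace ℝ (Fin N)))
    (x y : EuclideanSpace ℝ (Fin N)) : ℝ :=
  (max (dist x y) (max (infDist x S) (infDist y S))) ^ α /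
    (dist x y ^ ((N : ℝ) - σ) *
      (max (dist x y) (max (infDist x (frontier Ω)) (infDist y (frontier Ω)))) ^ σ)

/-- The quasi-ball `𝔅(x,s) = {y ∈ Ω : y ≠ x and 𝒩_{α,σ}(y,x)⁻¹ ≤ s}`. -/
def quasiBall (N : ℕ) (α σ : ℝ) (Ω S : Set (EuclideanSpace ℝ (Fin N)))
    (x : EuclideanSpace ℝ (Fin N)) (s : ℝ) : Set (EuclideanSpace ℝ (Fin N)) :=
  {y ∈ Ω | y ≠ x ∧ (NKernel N α σ Ω S y x)⁻¹ ≤ s}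

set_option maxHeartbeats 2000000 in
/-- Two-sided estimates for the `ω`-measure of quasi-balls, where
`ω(B(x,s) ∩ Ω) ≈ max{d(x),s}^b · max{d_Σ(x),s}^θ · s^N`. -/
theorem stmt_8 {N : ℕ} (hN : 3 ≤ N) (Ω S : Set (EuclideanSpace ℝ (Fin N)))
    (hΩo : IsOpen Ω) (hΩb : Bornology.IsBounded Ω)
    (hS : S ⊆ frontier Ω) (hSne : S.Nonempty) (hSc : IsCompact S)
    (α σ b θ : ℝ) (hα : α < N) (hσ0 : 0 < σ) (hσN : σ < N) (hb : 0 < b)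
    (ω : Measure (EuclideanSpace ℝ (Fin N)))
    (c₁ c₂ : ℝ) (hc₁ : 0 < c₁) (hc₂ : 0 < c₂)
    (hω : ∀ x ∈ Ω, ∀ s : ℝ, 0 < s → s ≤ 4 * diam Ω →
      ENNReal.ofReal (c₁ * ((max (infDist x (frontier Ω)) s) ^ b *
          (max (infDist x S) s) ^ θ * s ^ (N : ℝ))) ≤ ω (ball x s ∩ Ω) ∧
      ω (ball x s ∩ Ω) ≤ ENNReal.ofReal (c₂ * ((max (infDist x (frontier Ω)) s) ^ b *
          (max (infDist x S) s) ^ θ * s ^ (N : ℝ)))) :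
    ∃ C' > 0, ∃ C'' > 0, ∀ x ∈ Ω, ∀ s : ℝ, 0 < s →
      ((s ≤ infDist x (frontier Ω) ^ (N : ℝ) * infDist x S ^ (-α) →
        ENNReal.ofReal (C' * (infDist x (frontier Ω) ^ (b - σ * N / ((N : ℝ) - σ)) *
            infDist x S ^ (θ + α * N / ((N : ℝ) - σ)) * s ^ ((N : ℝ) / ((N : ℝ) - σ)))) ≤
          ω (quasiBall N α σ Ω S x s) ∧
        ω (quasiBall N α σ Ω S x s) ≤
          ENNReal.ofReal (C'' * (infDist x (frontier Ω) ^ (b - σ * N / ((N : ℝ) - σ)) *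
            infDist x S ^ (θ + α * N / ((N : ℝ) - σ)) * s ^ ((N : ℝ) / ((N : ℝ) - σ))))) ∧
      (infDist x (frontier Ω) ^ (N : ℝ) * infDist x S ^ (-α) < s →
          s ≤ infDist x S ^ ((N : ℝ) - α) →
        ENNReal.ofReal (C' * (s ^ ((b + N) / N) *
            infDist x S ^ (θ + α * (b + N) / N))) ≤ ω (quasiBall N α σ Ω S x s) ∧
        ω (quasiBall N α σ Ω S x s) ≤ ENNReal.ofReal (C'' * (s ^ ((b + N) / N) *
            infDist x S ^ (θ + α * (b + N) / N)))) ∧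
      (infDist x S ^ ((N : ℝ) - α) ≤ s → s ≤ (4 * diam Ω) ^ ((N : ℝ) - α) →
        ENNReal.ofReal (C' * s ^ ((b + θ + N) / ((N : ℝ) - α))) ≤
          ω (quasiBall N α σ Ω S x s) ∧
        ω (quasiBall N α σ Ω S x s) ≤
          ENNReal.ofReal (C'' * s ^ ((b + θ + N) / ((N : ℝ) - α)))) ∧
      ((4 * diam Ω) ^ ((N : ℝ) - α) ≤ s →
        ENNReal.ofReal (C' * ((4 * diam Ω) ^ ((N : ℝ) - α)) ^ ((b + θ + N) / ((N : ℝ) - α))) ≤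
          ω (quasiBall N α σ Ω S x s) ∧
        ω (quasiBall N α σ Ω S x s) ≤
          ENNReal.ofReal (C'' * ((4 * diam Ω) ^ ((N : ℝ) - α)) ^ ((b + θ + N) / ((N : ℝ) - α))))) := by
  have hn3 : (3:ℝ) ≤ (N:ℝ) := by exact_mod_cast hN
  have hnσ : (0:ℝ) < (N:ℝ) - σ := by linarith only [hn3, hσN]
  have hnα : (0:ℝ) < (N:ℝ) - α := by linarith only [hα]
  have hn0 : (0:ℝ) < (N:ℝ) := by linarith only [hn3]
  -- nonemptiness and diameter facts
  obtain ⟨p0, hp0S⟩ := hSne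
  have hp0f : p0 ∈ frontier Ω := hS hp0S
  have hΩne : Ω.Nonempty := by
    rcases Set.eq_empty_or_nonempty Ω with h | h
    · exfalso; rw [h] at hp0f; simp at hp0f
    · exact h
  have hfr_ne : (frontier Ω).Nonempty := ⟨p0, hp0f⟩
  have hdistD : ∀ z ∈ closure Ω, ∀ w ∈ closure Ω, dist z w ≤ diam Ω := by
    intro z hz w hw
    have := Metric.dist_le_diam_of_mem hΩb.closure hz hw
    rwa [Metric.diam_closure] at this
  have hdpos : ∀ z ∈ Ω, 0 < infDist z (frontier Ω) := by
    intro z hz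
    have hzf : z ∉ frontier Ω := by
      rw [hΩo.frontier_eq]; exact fun h => h.2 hz
    exact (isClosed_frontier.notMem_iff_infDist_pos hfr_ne).1 hzf
  have hdleD : ∀ z ∈ Ω, infDist z (frontier Ω) ≤ diam Ω := fun z hz =>
    (infDist_le_dist_of_mem hp0f).trans
      (hdistD z (subset_closure hz) p0 (frontier_subset_closure hp0f))
  have hD0 : 0 < diam Ω := by
    obtain ⟨x0, hx0⟩ := hΩne
    exact lt_of_lt_of_le (hdpos x0 hx0) (hdleD x0 hx0)
  have h4D : 0 < 4 * diam Ω := by linarith only [hD0]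
  -- constants
  set κ := min ((N:ℝ) - σ) ((N:ℝ) - α) with hκdef
  have hκ0 : 0 < κ := lt_min hnσ hnα
  set Aa := (2:ℝ) ^ (σ + |α|) with hAadef
  have hAa1 : (1:ℝ) ≤ Aa := Real.one_le_rpow one_le_two (by positivity)
  have hAa0 : (0:ℝ) < Aa := lt_of_lt_of_le one_pos hAa1
  set Ai := (2:ℝ) ^ |α| with hAidef
  have hAi1 : (1:ℝ) ≤ Ai := Real.one_le_rpow one_le_two (abs_nonneg α)
  have hAi0 : (0:ℝ) < Ai := lt_of_lt_of_le one_pos hAi1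
  set Bb := (2:ℝ) ^ (-|α|) with hBbdef
  have hBb0 : (0:ℝ) < Bb := Real.rpow_pos_of_pos two_pos _
  have hBbAi : Bb * Ai = 1 := by
    rw [hBbdef, hAidef, ← Real.rpow_add two_pos, neg_add_cancel, Real.rpow_zero]
  set ν := Aa ^ (-(1/κ)) with hνdef
  have hν0 : 0 < ν := Real.rpow_pos_of_pos hAa0 _
  have hν1 : ν ≤ 1 := Real.rpow_le_one_of_one_le_of_nonpos hAa1
    (neg_nonpos.2 (by positivity))
  have hνinv : ν⁻¹ = Aa ^ (1/κ) := by
    rw [hνdef, Real.rpow_neg hAa0.le, inv_inv]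
  have hν1' : 1 ≤ ν⁻¹ := by
    rw [hνinv]; exact Real.one_le_rpow hAa1 (by positivity)
  have hνκ : ν⁻¹ ^ κ = Aa := by
    rw [hνinv, ← Real.rpow_mul hAa0.le, one_div_mul_cancel hκ0.ne', Real.rpow_one]
  set μ := Ai ^ (1/κ) with hμdef
  have hμ1 : 1 ≤ μ := Real.one_le_rpow hAi1 (by positivity)
  have hμ0 : 0 < μ := lt_of_lt_of_le one_pos hμ1
  have hμκ : μ ^ κ = Ai := by
    rw [hμdef, ← Real.rpow_mul hAi0.le, one_div_mul_cancel hκ0.ne', Real.rpow_one]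
  have h2μ1 : (1:ℝ) ≤ 2*μ := by linarith only [hμ1]
  have h2μ0 : (0:ℝ) < 2*μ := by linarith only [hμ0]
  set C' := c₁ * ν ^ (b + 2*|θ| + (N:ℝ)) with hC'def
  set C'' := c₂ * (2*μ) ^ (b + |θ| + (N:ℝ)) with hC''def
  have hC'0 : 0 < C' := mul_pos hc₁ (Real.rpow_pos_of_pos hν0 _)
  have hC''0 : 0 < C'' := mul_pos hc₂ (Real.rpow_pos_of_pos h2μ0 _)
  have hC'le : ∀ E : ℝ, E ≤ b + 2*|θ| + (N:ℝ) → C' ≤ c₁ * ν ^ E := fun E hE =>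
    mul_le_mul_of_nonneg_left (Real.rpow_le_rpow_of_exponent_ge hν0 hν1 hE) hc₁.le
  have hC''ge : c₂ ≤ C'' := by
    have h1 : (1:ℝ) ≤ (2*μ) ^ (b + |θ| + (N:ℝ)) :=
      Real.one_le_rpow h2μ1 (by positivity)
    exact le_mul_of_one_le_right hc₂.le h1
  have hmul3 : ∀ a1 a2 a3 b1 b2 b3 : ℝ, 0 ≤ a1 → 0 ≤ a2 → 0 ≤ a3 →
      a1 ≤ b1 → a2 ≤ b2 → a3 ≤ b3 → a1*a2*a3 ≤ b1*b2*b3 := by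
    intro a1 a2 a3 b1 b2 b3 h1 h2 h3 h4 h5 h6
    have hb1 : 0 ≤ b1 := h1.trans h4
    have hb2 : 0 ≤ b2 := h2.trans h5
    exact mul_le_mul (mul_le_mul h4 h5 h2 hb1) h6 h3 (mul_nonneg hb1 hb2)
  refine ⟨C', hC'0, C'', hC''0, ?_⟩
  intro x hx s hs
  set d := infDist x (frontier Ω) with hd_def
  set e := infDist x S with he_def
  have hd : 0 < d := hdpos x hx
  have hde : d ≤ e := infDist_le_infDist_of_subset hS ⟨p0, hp0S⟩
  have he : 0 < e := hd.trans_le hde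
  have heD : e ≤ diam Ω := (infDist_le_dist_of_mem hp0S).trans
    (hdistD x (subset_closure hx) p0 (frontier_subset_closure hp0f))
  have hdD : d ≤ diam Ω := hde.trans heD
  set F := fun r : ℝ => r ^ ((N:ℝ) - σ) * max r d ^ σ / max r e ^ α with hFdef
  have hFm : StrictMonoOn F (Ici 0) := Fmono hσ0 hσN hα hd hde
  have hFgrow : ∀ r L : ℝ, 0 < r → 1 ≤ L → L ^ κ * F r ≤ F (L * r) := by
    intro r L hr hL
    simpa only [hFdef] using Fgrow (n := (N:ℝ)) hσ0 hσN hα hd hde hr hL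
  -- kernel comparison
  have hker : ∀ y : EuclideanSpace ℝ (Fin N), (NKernel N α σ Ω S y x)⁻¹
      = dist y x ^ ((N:ℝ) - σ)
        * (max (dist y x) (max (infDist y (frontier Ω)) d)) ^ σ
        / (max (dist y x) (max (infDist y S) e)) ^ α := by
    intro y
    rw [NKernel, inv_div, hd_def, he_def]
  have hcomp : ∀ y, y ∈ Ω → y ≠ x →
      Bb * F (dist y x) ≤ (NKernel N α σ Ω S y x)⁻¹ ∧
      (NKernel N α σ Ω S y x)⁻¹ ≤ Aa * F (dist y x) := by
    intro y hy hyx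
    have hr : 0 < dist y x := dist_pos.2 hyx
    set r := dist y x with hr_def
    have hmrd : 0 < max r d := lt_max_of_lt_right hd
    have hmre : 0 < max r e := lt_max_of_lt_right he
    have hdy : infDist y (frontier Ω) ≤ d + r := by
      rw [hd_def, hr_def]; exact infDist_le_infDist_add_dist
    have hey : infDist y S ≤ e + r := by
      rw [he_def, hr_def]; exact infDist_le_infDist_add_dist
    set MD := max r (max (infDist y (frontier Ω)) d) with hMDdef
    set ME := max r (max (infDist y S) e) with hMEdef
    have hMD1 : max r d ≤ MD := max_le_max le_rfl (le_max_right _ _)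
    have hMD2 : MD ≤ 2 * max r d := by
      apply max_le
      · linarith only [le_max_left r d, hmrd]
      · apply max_le
        · linarith only [hdy, le_max_left r d, le_max_right r d]
        · linarith only [le_max_right r d, hmrd]
    have hME1 : max r e ≤ ME := max_le_max le_rfl (le_max_right _ _)
    have hME2 : ME ≤ 2 * max r e := by
      apply max_le
      · linarith only [le_max_left r e, hmre]
      · apply max_le
        · linarith only [hey, le_max_left r e, le_max_right r e]
        · linarith only [le_max_right r e, hmre]
    have hMD0 : 0 < MD := lt_of_lt_of_le hmrd hMD1
    have hME0 : 0 < ME := lt_of_lt_of_le hmre hME1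
    have hX : 0 < r ^ ((N:ℝ) - σ) := Real.rpow_pos_of_pos hr _
    have hkeq := hker y
    rw [← hr_def, ← hMDdef, ← hMEdef] at hkeq
    rw [hkeq]
    have hmrdσ : 0 < max r d ^ σ := Real.rpow_pos_of_pos hmrd σ
    have hmreα : 0 < max r e ^ α := Real.rpow_pos_of_pos hmre α
    have hMDσ : 0 < MD ^ σ := Real.rpow_pos_of_pos hMD0 σ
    have hMEα : 0 < ME ^ α := Real.rpow_pos_of_pos hME0 α
    have hAi' : Bb = Ai⁻¹ := eq_inv_of_mul_eq_one_left hBbAi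
    constructor
    · -- lower bound
      have hnum : r ^ ((N:ℝ)-σ) * max r d ^ σ ≤ r ^ ((N:ℝ)-σ) * MD ^ σ :=
        mul_le_mul_of_nonneg_left (Real.rpow_le_rpow hmrd.le hMD1 hσ0.le) hX.le
      have hden : ME ^ α ≤ Ai * max r e ^ α := by
        have h1 := bracket_rpow_le α hmre one_le_two hME1 hME2
        rwa [← hAidef] at h1
      have key : (r ^ ((N:ℝ)-σ) * max r d ^ σ) / (Ai * max r e ^ α)
          ≤ (r ^ ((N:ℝ)-σ) * MD ^ σ) / ME ^ α :=
        div_le_div₀ (by positivity) hnum hMEα hden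
      refine le_trans (le_of_eq ?_) key
      simp only [hFdef]
      rw [hAi']
      field_simp
    · -- upper bound
      have hnum : r ^ ((N:ℝ)-σ) * MD ^ σ ≤ r ^ ((N:ℝ)-σ) * ((2:ℝ)^σ * max r d ^ σ) := by
        apply mul_le_mul_of_nonneg_left ?_ hX.le
        have h1 := bracket_rpow_le σ hmrd one_le_two hMD1 hMD2
        rwa [abs_of_pos hσ0] at h1
      have hden : Bb * max r e ^ α ≤ ME ^ α := by
        have h1 := le_bracket_rpow α hmre one_le_two hME1 hME2
        rwa [← hBbdef] at h1
      have key : (r ^ ((N:ℝ)-σ) * MD ^ σ) / ME ^ α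
          ≤ (r ^ ((N:ℝ)-σ) * ((2:ℝ)^σ * max r d ^ σ)) / (Bb * max r e ^ α) := by
        apply div_le_div₀ (by positivity) hnum (by positivity) hden
      refine le_trans key (le_of_eq ?_)
      simp only [hFdef]
      rw [hAi', hAadef, Real.rpow_add two_pos, ← hAidef]
      field_simp
  -- the point x is ω-null
  have hωx : ω {x} = 0 := by
    have key : ∀ t : ℝ, t ∈ Ioc (0:ℝ) d →
        ω {x} ≤ ENNReal.ofReal (c₂ * (d ^ b * e ^ θ) * t ^ (N:ℝ)) := by
      rintro t ⟨ht0, htd⟩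
      have h4 : t ≤ 4 * diam Ω := le_trans (htd.trans hdD) (by linarith only [hD0])
      have hsub : {x} ⊆ ball x t ∩ Ω := by
        intro z hz
        rw [mem_singleton_iff] at hz
        subst hz
        exact ⟨mem_ball_self ht0, hx⟩
      refine le_trans (measure_mono hsub)
        (le_trans (hω x hx t ht0 h4).2 (ENNReal.ofReal_le_ofReal (le_of_eq ?_)))
      rw [← hd_def, ← he_def, max_eq_left htd, max_eq_left (htd.trans hde)]
      ring
    have htend : Filter.Tendsto
        (fun t : ℝ => ENNReal.ofReal (c₂ * (d ^ b * e ^ θ) * t ^ (N:ℝ)))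
        (nhdsWithin 0 (Ioi 0)) (nhds 0) := by
      have h2 : Filter.Tendsto (fun t : ℝ => t ^ (N:ℝ)) (nhdsWithin 0 (Ioi 0)) (nhds 0) := by
        simp only [Real.rpow_natCast]
        have h3 := (continuous_pow N).tendsto (0:ℝ)
        rw [zero_pow (by omega : N ≠ 0)] at h3
        exact h3.mono_left nhdsWithin_le_nhds
      have h4 := h2.const_mul (c₂ * (d ^ b * e ^ θ))
      rw [mul_zero] at h4
      have h5 := (ENNReal.continuous_ofReal.tendsto 0).comp h4
      simpa [Function.comp_def] using h5
    have hev : ∀ᶠ t in nhdsWithin (0:ℝ) (Ioi 0),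
        ω {x} ≤ ENNReal.ofReal (c₂ * (d ^ b * e ^ θ) * t ^ (N:ℝ)) := by
      filter_upwards [Ioc_mem_nhdsGT_of_mem (Set.mem_Ico.2 ⟨le_refl (0:ℝ), hd⟩)] with t ht
      exact key t ht
    exact le_antisymm (ge_of_tendsto htend hev) zero_le
  -- master lower bound
  have hMLow : ∀ t ρ : ℝ, 0 < ρ → ρ ≤ 4 * diam Ω → Aa * F ρ ≤ t →
      ENNReal.ofReal (c₁ * (max d ρ ^ b * max e ρ ^ θ * ρ ^ (N:ℝ)))
        ≤ ω (quasiBall N α σ Ω S x t) := by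
    intro t ρ hρ0 hρ4 hAF
    have hsub : ball x ρ ∩ Ω ⊆ quasiBall N α σ Ω S x t ∪ {x} := by
      intro y hy
      obtain ⟨hyb, hyΩ⟩ := hy
      rcases eq_or_ne y x with rfl | hyx
      · exact Or.inr rfl
      · left
        refine ⟨hyΩ, hyx, ?_⟩
        have hrρ : dist y x ≤ ρ := le_of_lt (mem_ball.1 hyb)
        calc (NKernel N α σ Ω S y x)⁻¹ ≤ Aa * F (dist y x) := (hcomp y hyΩ hyx).2
          _ ≤ Aa * F ρ := by
              rcases eq_or_lt_of_le hrρ with h | h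
              · rw [h]
              · exact mul_le_mul_of_nonneg_left
                  (le_of_lt (hFm (mem_Ici.2 dist_nonneg) (mem_Ici.2 hρ0.le) h)) hAa0.le
          _ ≤ t := hAF
    have hl := (hω x hx ρ hρ0 hρ4).1
    rw [← hd_def, ← he_def] at hl
    calc ENNReal.ofReal (c₁ * (max d ρ ^ b * max e ρ ^ θ * ρ ^ (N:ℝ)))
        ≤ ω (ball x ρ ∩ Ω) := hl
      _ ≤ ω (quasiBall N α σ Ω S x t ∪ {x}) := measure_mono hsub
      _ ≤ ω (quasiBall N α σ Ω S x t) + ω {x} := measure_union_le _ _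
      _ = ω (quasiBall N α σ Ω S x t) := by rw [hωx, add_zero]
  -- master upper bound
  have hMUp : ∀ t ρ : ℝ, 0 < ρ → t ≤ Bb * F ρ →
      ω (quasiBall N α σ Ω S x t) ≤ ENNReal.ofReal (c₂ *
        (max d (min (2*ρ) (4*diam Ω)) ^ b * max e (min (2*ρ) (4*diam Ω)) ^ θ *
          (min (2*ρ) (4*diam Ω)) ^ (N:ℝ))) := by
    intro t ρ hρ0 htB
    have ht'0 : 0 < min (2*ρ) (4*diam Ω) := lt_min (by linarith only [hρ0]) h4D
    have hsub : quasiBall N α σ Ω S x t ⊆ ball x (min (2*ρ) (4*diam Ω)) ∩ Ω := by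
      intro y hy
      obtain ⟨hyΩ, hyx, hle⟩ := hy
      have hr0 : 0 < dist y x := dist_pos.2 hyx
      have h1 : Bb * F (dist y x) ≤ Bb * F ρ :=
        le_trans (le_trans (hcomp y hyΩ hyx).1 hle) htB
      have h2 : F (dist y x) ≤ F ρ := le_of_mul_le_mul_left h1 hBb0
      have h3 : dist y x ≤ ρ := by
        by_contra hcon
        push_neg at hcon
        exact absurd h2 (not_le.2 (hFm (mem_Ici.2 hρ0.le) (mem_Ici.2 hr0.le) hcon))
      refine ⟨mem_ball.2 (lt_min (by linarith only [h3, hρ0]) ?_), hyΩ⟩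
      have h9 := hdistD y (subset_closure hyΩ) x (subset_closure hx)
      linarith only [h9, hD0]
    have hu := (hω x hx (min (2*ρ) (4*diam Ω)) ht'0 (min_le_right _ _)).2
    rw [← hd_def, ← he_def] at hu
    exact le_trans (measure_mono hsub) hu
  -- combined regime machine
  have hREG : ∀ t r' : ℝ, 0 < r' → r' ≤ 4 * diam Ω → F r' = t →
      (ENNReal.ofReal (c₁ * (max d (ν*r') ^ b * max e (ν*r') ^ θ * (ν*r') ^ (N:ℝ)))
          ≤ ω (quasiBall N α σ Ω S x t)) ∧
      (ω (quasiBall N α σ Ω S x t) ≤ ENNReal.ofReal (c₂ *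
        (max d (min (2*(μ*r')) (4*diam Ω)) ^ b * max e (min (2*(μ*r')) (4*diam Ω)) ^ θ *
          (min (2*(μ*r')) (4*diam Ω)) ^ (N:ℝ)))) := by
    intro t r' hr' hr4 hFt
    constructor
    · apply hMLow
      · positivity
      · exact le_trans (mul_le_of_le_one_left hr'.le hν1) hr4
      · have hg := hFgrow (ν*r') ν⁻¹ (by positivity) hν1'
        rw [inv_mul_cancel_left₀ hν0.ne'] at hg
        rw [hνκ, hFt] at hg
        exact hg
    · apply hMUp
      · positivity
      · have hg := hFgrow r' μ hr' hμ1
        rw [hμκ, hFt] at hg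
        have h9 : Bb * (Ai * t) ≤ Bb * F (μ*r') := mul_le_mul_of_nonneg_left hg hBb0.le
        calc t = Bb * (Ai * t) := by rw [← mul_assoc, hBbAi, one_mul]
          _ ≤ Bb * F (μ*r') := h9
  -- regime (iii) bound, for reuse in (iv)
  have hREG3 : ∀ t : ℝ, e ^ ((N:ℝ)-α) ≤ t → t ≤ (4*diam Ω) ^ ((N:ℝ)-α) →
      (ENNReal.ofReal (C' * t ^ ((b+θ+(N:ℝ))/((N:ℝ)-α))) ≤ ω (quasiBall N α σ Ω S x t)) ∧
      (ω (quasiBall N α σ Ω S x t) ≤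
        ENNReal.ofReal (C'' * t ^ ((b+θ+(N:ℝ))/((N:ℝ)-α)))) := by
    intro t het ht4
    have ht0 : 0 < t := lt_of_lt_of_le (Real.rpow_pos_of_pos he _) het
    set R := t ^ (1/((N:ℝ)-α)) with hRdef
    have hR0 : 0 < R := Real.rpow_pos_of_pos ht0 _
    have hRn : R ^ ((N:ℝ)-α) = t := by
      rw [hRdef, ← Real.rpow_mul ht0.le, one_div_mul_cancel hnα.ne', Real.rpow_one]
    have heR : e ≤ R := by
      have h1 : e ^ ((N:ℝ)-α) ≤ R ^ ((N:ℝ)-α) := by rw [hRn]; exact het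
      exact (Real.rpow_le_rpow_iff he.le hR0.le hnα).1 h1
    have hR4 : R ≤ 4*diam Ω := by
      have h1 : R ^ ((N:ℝ)-α) ≤ (4*diam Ω) ^ ((N:ℝ)-α) := by rw [hRn]; exact ht4
      exact (Real.rpow_le_rpow_iff hR0.le h4D.le hnα).1 h1
    have hdR : d ≤ R := hde.trans heR
    have hFR : F R = t := by
      simp only [hFdef]
      rw [max_eq_left hdR, max_eq_left heR, ← Real.rpow_add hR0,
        show ((N:ℝ)-σ)+σ = (N:ℝ) from by ring, ← Real.rpow_sub hR0]
      exact hRn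
    have hreg := hREG t R hR0 hR4 hFR
    have hRq : R ^ (b+θ+(N:ℝ)) = t ^ ((b+θ+(N:ℝ))/((N:ℝ)-α)) := by
      rw [hRdef, ← Real.rpow_mul ht0.le,
        show 1/((N:ℝ)-α)*(b+θ+(N:ℝ)) = (b+θ+(N:ℝ))/((N:ℝ)-α) from by ring]
    have hRsplit : R^b * R^θ * R^(N:ℝ) = R^(b+θ+(N:ℝ)) := by
      rw [← Real.rpow_add hR0, ← Real.rpow_add hR0]
    constructor
    · refine le_trans (ENNReal.ofReal_le_ofReal ?_) hreg.1
      have hρ0 : 0 < ν*R := by positivity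
      have hmd : (ν*R) ^ b ≤ max d (ν*R) ^ b :=
        Real.rpow_le_rpow hρ0.le (le_max_right _ _) hb.le
      have hbr : ν^(2*|θ|) * R ^ θ ≤ max e (ν*R) ^ θ := by
        have h1 : max e (ν*R) ≤ ν⁻¹ * (ν*R) := by
          rw [inv_mul_cancel_left₀ hν0.ne']
          exact max_le heR (mul_le_of_le_one_left hR0.le hν1)
        have h2 := le_bracket_rpow θ hρ0 hν1' (le_max_right _ _) h1
        have h3 : ν⁻¹ ^ (-|θ|) = ν ^ |θ| := by
          rw [Real.inv_rpow hν0.le, Real.rpow_neg hν0.le, inv_inv]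
        have h6 : ν ^ (2*|θ|) ≤ ν ^ (|θ| + θ) :=
          Real.rpow_le_rpow_of_exponent_ge hν0 hν1 (by linarith only [le_abs_self θ])
        calc ν^(2*|θ|) * R^θ ≤ ν^(|θ|+θ) * R^θ :=
              mul_le_mul_of_nonneg_right h6 (Real.rpow_nonneg hR0.le θ)
          _ = ν⁻¹ ^ (-|θ|) * (ν*R)^θ := by
              rw [h3, Real.mul_rpow hν0.le hR0.le, Real.rpow_add hν0]
              ring
          _ ≤ max e (ν*R) ^ θ := h2
      have h7 : (ν*R)^b = ν^b * R^b := Real.mul_rpow hν0.le hR0.le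
      have hνN : (ν*R) ^ (N:ℝ) = ν^(N:ℝ) * R^(N:ℝ) := Real.mul_rpow hν0.le hR0.le
      have hconst : ν^b * ν^(2*|θ|) * ν^(N:ℝ) = ν^(b+2*|θ|+(N:ℝ)) := by
        rw [← Real.rpow_add hν0, ← Real.rpow_add hν0]
      calc C' * t ^ ((b+θ+(N:ℝ))/((N:ℝ)-α))
          = c₁ * ν^(b+2*|θ|+(N:ℝ)) * R^(b+θ+(N:ℝ)) := by rw [← hRq, hC'def]
        _ = c₁ * ((ν^b*R^b) * (ν^(2*|θ|) * R^θ) * (ν^(N:ℝ)*R^(N:ℝ))) := by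
              rw [← hconst, ← hRsplit]; ring
        _ ≤ c₁ * (max d (ν*R) ^ b * max e (ν*R) ^ θ * (ν*R) ^ (N:ℝ)) := by
              apply mul_le_mul_of_nonneg_left ?_ hc₁.le
              rw [hνN]
              apply hmul3
              · exact mul_nonneg (Real.rpow_nonneg hν0.le b) (Real.rpow_nonneg hR0.le b)
              · exact mul_nonneg (Real.rpow_nonneg hν0.le _) (Real.rpow_nonneg hR0.le θ)
              · exact mul_nonneg (Real.rpow_nonneg hν0.le _) (Real.rpow_nonneg hR0.le _)
              · rw [← h7]; exact hmd
              · exact hbr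
              · exact le_refl _
    · refine le_trans hreg.2 (ENNReal.ofReal_le_ofReal ?_)
      have ht'0 : 0 < min (2*(μ*R)) (4*diam Ω) := lt_min (by positivity) h4D
      have ht'le : min (2*(μ*R)) (4*diam Ω) ≤ (2*μ)*R :=
        (min_le_left _ _).trans (le_of_eq (by ring))
      have ht'ge : R ≤ min (2*(μ*R)) (4*diam Ω) := by
        refine le_min ?_ hR4
        calc R = 1*R := (one_mul R).symm
          _ ≤ μ*R := mul_le_mul_of_nonneg_right hμ1 hR0.le
          _ ≤ 2*(μ*R) := by linarith only [mul_pos hμ0 hR0]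
      have e1 : max d (min (2*(μ*R)) (4*diam Ω)) ^ b ≤ (2*μ)^b * R^b := by
        have h1 : max d (min (2*(μ*R)) (4*diam Ω)) ≤ (2*μ)*R :=
          max_le (hdR.trans (le_mul_of_one_le_left hR0.le h2μ1)) ht'le
        calc max d (min (2*(μ*R)) (4*diam Ω)) ^ b ≤ ((2*μ)*R)^b :=
              Real.rpow_le_rpow (le_trans hd.le (le_max_left _ _)) h1 hb.le
          _ = (2*μ)^b * R^b := Real.mul_rpow h2μ0.le hR0.le
      have e2 : max e (min (2*(μ*R)) (4*diam Ω)) ^ θ ≤ (2*μ)^|θ| * R^θ := by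
        apply bracket_rpow_le θ hR0 h2μ1 (le_trans ht'ge (le_max_right _ _))
        exact max_le (heR.trans (le_mul_of_one_le_left hR0.le h2μ1)) ht'le
      have e3 : (min (2*(μ*R)) (4*diam Ω)) ^ (N:ℝ) ≤ (2*μ)^(N:ℝ) * R^(N:ℝ) := by
        calc (min (2*(μ*R)) (4*diam Ω)) ^ (N:ℝ) ≤ ((2*μ)*R) ^ (N:ℝ) :=
              Real.rpow_le_rpow ht'0.le ht'le hn0.le
          _ = _ := Real.mul_rpow h2μ0.le hR0.le
      have hCsplit : (2*μ) ^ (b+|θ|+(N:ℝ)) = (2*μ)^b * (2*μ)^|θ| * (2*μ)^(N:ℝ) := by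
        rw [Real.rpow_add h2μ0, Real.rpow_add h2μ0]
      calc c₂ * (max d (min (2*(μ*R)) (4*diam Ω)) ^ b *
            max e (min (2*(μ*R)) (4*diam Ω)) ^ θ * (min (2*(μ*R)) (4*diam Ω)) ^ (N:ℝ))
          ≤ c₂ * (((2*μ)^b * R^b) * ((2*μ)^|θ| * R^θ) * ((2*μ)^(N:ℝ) * R^(N:ℝ))) := by
            apply mul_le_mul_of_nonneg_left ?_ hc₂.le
            apply hmul3 _ _ _ _ _ _ ?_ ?_ ?_ e1 e2 e3
            · exact Real.rpow_nonneg (le_trans hd.le (le_max_left _ _)) b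
            · exact Real.rpow_nonneg (le_trans he.le (le_max_left _ _)) θ
            · exact Real.rpow_nonneg ht'0.le _
        _ = C'' * t ^ ((b+θ+(N:ℝ))/((N:ℝ)-α)) := by
            rw [hC''def, hCsplit, ← hRq, ← hRsplit]; ring
  refine ⟨?_, ?_, fun h1 h2 => hREG3 s h1 h2, ?_⟩
  -- ===================== regime (i) =====================
  · intro hsle
    have heα := Real.rpow_pos_of_pos he α
    have hdσ := Real.rpow_pos_of_pos hd σ
    have hXpos : 0 < s * e ^ α / d ^ σ := by positivity
    set R := (s * e ^ α / d ^ σ) ^ (1/((N:ℝ) - σ)) with hRdef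
    have hR0 : 0 < R := Real.rpow_pos_of_pos hXpos _
    have hRnσ : R ^ ((N:ℝ) - σ) = s * e ^ α / d ^ σ := by
      rw [hRdef, ← Real.rpow_mul hXpos.le, one_div_mul_cancel hnσ.ne', Real.rpow_one]
    have hRd : R ≤ d := by
      have h2 : e ^ (-α) * e ^ α = 1 := by
        rw [← Real.rpow_add he, neg_add_cancel, Real.rpow_zero]
      have h4 : d ^ (N:ℝ) * e^(-α) * e^α = d^(N:ℝ) := by rw [mul_assoc, h2, mul_one]
      have h3 : s * e ^ α ≤ d ^ (N:ℝ) := by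
        calc s * e^α ≤ d^(N:ℝ)*e^(-α)*e^α := mul_le_mul_of_nonneg_right hsle heα.le
          _ = d^(N:ℝ) := h4
      have h1 : R ^ ((N:ℝ)-σ) ≤ d ^ ((N:ℝ)-σ) := by
        rw [hRnσ, Real.rpow_sub hd]
        exact (div_le_div_iff_of_pos_right hdσ).2 h3
      exact (Real.rpow_le_rpow_iff hR0.le hd.le hnσ).1 h1
    have hRe : R ≤ e := hRd.trans hde
    have hFR : F R = s := by
      simp only [hFdef]
      rw [max_eq_right hRd, max_eq_right hRe, hRnσ]
      field_simp
    have hreg := hREG s R hR0 (hRd.trans (hdD.trans (by linarith only [hD0]))) hFR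
    have hRn : R ^ (N:ℝ)
        = s ^ ((N:ℝ)/((N:ℝ)-σ)) * e ^ (α*(N:ℝ)/((N:ℝ)-σ)) / d ^ (σ*(N:ℝ)/((N:ℝ)-σ)) := by
      rw [hRdef, ← Real.rpow_mul hXpos.le,
        show 1/((N:ℝ)-σ) * (N:ℝ) = (N:ℝ)/((N:ℝ)-σ) from by ring,
        Real.div_rpow (by positivity) hdσ.le, Real.mul_rpow hs.le heα.le,
        ← Real.rpow_mul he.le, ← Real.rpow_mul hd.le,
        show α*((N:ℝ)/((N:ℝ)-σ)) = α*(N:ℝ)/((N:ℝ)-σ) from by ring,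
        show σ*((N:ℝ)/((N:ℝ)-σ)) = σ*(N:ℝ)/((N:ℝ)-σ) from by ring]
    have hsplit1 : d ^ (b - σ*(N:ℝ)/((N:ℝ)-σ)) = d ^ b / d ^ (σ*(N:ℝ)/((N:ℝ)-σ)) :=
      Real.rpow_sub hd _ _
    have hsplit2 : e ^ (θ + α*(N:ℝ)/((N:ℝ)-σ)) = e ^ θ * e ^ (α*(N:ℝ)/((N:ℝ)-σ)) :=
      Real.rpow_add he _ _
    constructor
    · refine le_trans (ENNReal.ofReal_le_ofReal ?_) hreg.1
      have hνRd : ν * R ≤ d := le_trans (mul_le_of_le_one_left hR0.le hν1) hRd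
      have hνRe : ν * R ≤ e := hνRd.trans hde
      rw [max_eq_left hνRd, max_eq_left hνRe, hsplit1, hsplit2,
        Real.mul_rpow hν0.le hR0.le, hRn]
      have hkey : C' ≤ c₁ * ν ^ (N:ℝ) := hC'le (N:ℝ) (by linarith only [abs_nonneg θ, hb])
      have hW : (0:ℝ) ≤ d ^ b * e ^ θ * (s ^ ((N:ℝ)/((N:ℝ)-σ)) *
          e ^ (α*(N:ℝ)/((N:ℝ)-σ)) / d ^ (σ*(N:ℝ)/((N:ℝ)-σ))) := by positivity
      calc C' * (d ^ b / d ^ (σ*(N:ℝ)/((N:ℝ)-σ)) * (e ^ θ * e ^ (α*(N:ℝ)/((N:ℝ)-σ)))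
            * s ^ ((N:ℝ)/((N:ℝ)-σ)))
          = C' * (d ^ b * e ^ θ * (s ^ ((N:ℝ)/((N:ℝ)-σ)) * e ^ (α*(N:ℝ)/((N:ℝ)-σ))
            / d ^ (σ*(N:ℝ)/((N:ℝ)-σ)))) := by ring
        _ ≤ c₁ * ν ^ (N:ℝ) * (d ^ b * e ^ θ * (s ^ ((N:ℝ)/((N:ℝ)-σ)) *
            e ^ (α*(N:ℝ)/((N:ℝ)-σ)) / d ^ (σ*(N:ℝ)/((N:ℝ)-σ)))) :=
            mul_le_mul_of_nonneg_right hkey hW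
        _ = c₁ * (d ^ b * e ^ θ * (ν ^ (N:ℝ) * (s ^ ((N:ℝ)/((N:ℝ)-σ)) *
            e ^ (α*(N:ℝ)/((N:ℝ)-σ)) / d ^ (σ*(N:ℝ)/((N:ℝ)-σ))))) := by ring
    · refine le_trans hreg.2 (ENNReal.ofReal_le_ofReal ?_)
      rw [hsplit1, hsplit2]
      have ht'0 : 0 < min (2*(μ*R)) (4*diam Ω) := lt_min (by positivity) h4D
      have ht'le : min (2*(μ*R)) (4*diam Ω) ≤ (2*μ)*R :=
        (min_le_left _ _).trans (le_of_eq (by ring))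
      have e1 : max d (min (2*(μ*R)) (4*diam Ω)) ^ b ≤ (2*μ)^b * d^b := by
        have h1 := bracket_rpow_le b hd h2μ1 (le_max_left _ _)
          (max_le (le_mul_of_one_le_left hd.le h2μ1)
            (ht'le.trans (mul_le_mul_of_nonneg_left hRd h2μ0.le)))
        rwa [abs_of_pos hb] at h1
      have e2 : max e (min (2*(μ*R)) (4*diam Ω)) ^ θ ≤ (2*μ)^|θ| * e^θ :=
        bracket_rpow_le θ he h2μ1 (le_max_left _ _)
          (max_le (le_mul_of_one_le_left he.le h2μ1)
            (ht'le.trans (mul_le_mul_of_nonneg_left hRe h2μ0.le)))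
      have e3 : (min (2*(μ*R)) (4*diam Ω)) ^ (N:ℝ) ≤ (2*μ)^(N:ℝ) * R^(N:ℝ) := by
        calc (min (2*(μ*R)) (4*diam Ω)) ^ (N:ℝ) ≤ ((2*μ)*R) ^ (N:ℝ) :=
              Real.rpow_le_rpow ht'0.le ht'le hn0.le
          _ = _ := Real.mul_rpow h2μ0.le hR0.le
      have hCsplit : (2*μ) ^ (b+|θ|+(N:ℝ)) = (2*μ)^b * (2*μ)^|θ| * (2*μ)^(N:ℝ) := by
        rw [Real.rpow_add h2μ0, Real.rpow_add h2μ0]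
      calc c₂ * (max d (min (2*(μ*R)) (4*diam Ω)) ^ b *
            max e (min (2*(μ*R)) (4*diam Ω)) ^ θ * (min (2*(μ*R)) (4*diam Ω)) ^ (N:ℝ))
          ≤ c₂ * (((2*μ)^b * d^b) * ((2*μ)^|θ| * e^θ) * ((2*μ)^(N:ℝ) * R^(N:ℝ))) := by
            apply mul_le_mul_of_nonneg_left ?_ hc₂.le
            apply hmul3 _ _ _ _ _ _ ?_ ?_ ?_ e1 e2 e3
            · exact Real.rpow_nonneg (le_trans hd.le (le_max_left _ _)) b
            · exact Real.rpow_nonneg (le_trans he.le (le_max_left _ _)) θ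
            · exact Real.rpow_nonneg ht'0.le _
        _ = C'' * (d ^ b / d ^ (σ*(N:ℝ)/((N:ℝ)-σ)) * (e ^ θ * e ^ (α*(N:ℝ)/((N:ℝ)-σ)))
            * s ^ ((N:ℝ)/((N:ℝ)-σ))) := by
            rw [hC''def, hCsplit, hRn]; ring
  -- ===================== regime (ii) =====================
  · intro hlt hle2
    have heα := Real.rpow_pos_of_pos he α
    have hXpos : 0 < s * e ^ α := by positivity
    set R := (s * e ^ α) ^ (1/(N:ℝ)) with hRdef
    have hR0 : 0 < R := Real.rpow_pos_of_pos hXpos _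
    have hRN : R ^ (N:ℝ) = s * e ^ α := by
      rw [hRdef, ← Real.rpow_mul hXpos.le, one_div_mul_cancel hn0.ne', Real.rpow_one]
    have h2 : e ^ (-α) * e ^ α = 1 := by
      rw [← Real.rpow_add he, neg_add_cancel, Real.rpow_zero]
    have h4 : d ^ (N:ℝ) * e^(-α) * e^α = d^(N:ℝ) := by rw [mul_assoc, h2, mul_one]
    have hdR : d ≤ R := by
      have h3 : d ^ (N:ℝ) ≤ s * e ^ α := by
        calc d^(N:ℝ) = d^(N:ℝ)*e^(-α)*e^α := h4.symm
          _ ≤ s * e^α := mul_le_mul_of_nonneg_right hlt.le heα.le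
      have h1 : d ^ (N:ℝ) ≤ R ^ (N:ℝ) := by rw [hRN]; exact h3
      exact (Real.rpow_le_rpow_iff hd.le hR0.le hn0).1 h1
    have hRe : R ≤ e := by
      have h5 : e ^ ((N:ℝ)-α) * e^α = e^(N:ℝ) := by
        rw [← Real.rpow_add he, show (N:ℝ)-α+α = (N:ℝ) from by ring]
      have h1 : R ^ (N:ℝ) ≤ e ^ (N:ℝ) := by
        rw [hRN, ← h5]
        exact mul_le_mul_of_nonneg_right hle2 heα.le
      exact (Real.rpow_le_rpow_iff hR0.le he.le hn0).1 h1
    have hFR : F R = s := by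
      simp only [hFdef]
      rw [max_eq_left hdR, max_eq_right hRe, ← Real.rpow_add hR0,
        show ((N:ℝ)-σ)+σ = (N:ℝ) from by ring, hRN]
      field_simp
    have hreg := hREG s R hR0 (hRe.trans (heD.trans (by linarith only [hD0]))) hFR
    have hRbn : R ^ (b+(N:ℝ)) = s ^ ((b+(N:ℝ))/(N:ℝ)) * e ^ (α*(b+(N:ℝ))/(N:ℝ)) := by
      rw [hRdef, ← Real.rpow_mul hXpos.le,
        show 1/(N:ℝ)*(b+(N:ℝ)) = (b+(N:ℝ))/(N:ℝ) from by ring,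
        Real.mul_rpow hs.le heα.le, ← Real.rpow_mul he.le,
        show α*((b+(N:ℝ))/(N:ℝ)) = α*(b+(N:ℝ))/(N:ℝ) from by ring]
    have hsplit2 : e ^ (θ + α*(b+(N:ℝ))/(N:ℝ)) = e ^ θ * e ^ (α*(b+(N:ℝ))/(N:ℝ)) :=
      Real.rpow_add he _ _
    constructor
    · refine le_trans (ENNReal.ofReal_le_ofReal ?_) hreg.1
      have hνRe : ν * R ≤ e := le_trans (mul_le_of_le_one_left hR0.le hν1) hRe
      rw [max_eq_left hνRe, hsplit2]
      have hρ0 : 0 < ν*R := by positivity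
      have hmd : (ν*R) ^ b ≤ max d (ν*R) ^ b :=
        Real.rpow_le_rpow hρ0.le (le_max_right _ _) hb.le
      have hexp : (ν*R)^b * (ν*R)^(N:ℝ) = ν^(b+(N:ℝ)) * R^(b+(N:ℝ)) := by
        rw [← Real.rpow_add hρ0, Real.mul_rpow hν0.le hR0.le]
      have hkey : C' ≤ c₁ * ν ^ (b+(N:ℝ)) := hC'le _ (by linarith only [abs_nonneg θ])
      calc C' * (s ^ ((b+(N:ℝ))/(N:ℝ)) * (e ^ θ * e ^ (α*(b+(N:ℝ))/(N:ℝ))))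
          = C' * ((s ^ ((b+(N:ℝ))/(N:ℝ)) * e ^ (α*(b+(N:ℝ))/(N:ℝ))) * e^θ) := by ring
        _ ≤ c₁ * ν ^ (b+(N:ℝ)) * ((s ^ ((b+(N:ℝ))/(N:ℝ)) * e ^ (α*(b+(N:ℝ))/(N:ℝ))) * e^θ) := by
            apply mul_le_mul_of_nonneg_right hkey
            have h6 := Real.rpow_pos_of_pos hs ((b+(N:ℝ))/(N:ℝ))
            have h7 := Real.rpow_pos_of_pos he (α*(b+(N:ℝ))/(N:ℝ))
            have h8 := Real.rpow_pos_of_pos he θ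
            positivity
        _ = c₁ * (((ν*R)^b * (ν*R)^(N:ℝ)) * e^θ) := by rw [hexp, hRbn]; ring
        _ ≤ c₁ * ((max d (ν*R) ^ b * (ν*R)^(N:ℝ)) * e^θ) := by
            apply mul_le_mul_of_nonneg_left ?_ hc₁.le
            apply mul_le_mul_of_nonneg_right ?_ (Real.rpow_nonneg he.le θ)
            exact mul_le_mul_of_nonneg_right hmd (Real.rpow_nonneg hρ0.le _)
        _ = c₁ * (max d (ν*R) ^ b * e^θ * (ν*R)^(N:ℝ)) := by ring
    · refine le_trans hreg.2 (ENNReal.ofReal_le_ofReal ?_)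
      rw [hsplit2]
      have ht'0 : 0 < min (2*(μ*R)) (4*diam Ω) := lt_min (by positivity) h4D
      have ht'le : min (2*(μ*R)) (4*diam Ω) ≤ (2*μ)*R :=
        (min_le_left _ _).trans (le_of_eq (by ring))
      have e1 : max d (min (2*(μ*R)) (4*diam Ω)) ^ b ≤ (2*μ)^b * R^b := by
        have h1 : max d (min (2*(μ*R)) (4*diam Ω)) ≤ (2*μ)*R :=
          max_le (hdR.trans (le_mul_of_one_le_left hR0.le h2μ1)) ht'le
        calc max d (min (2*(μ*R)) (4*diam Ω)) ^ b ≤ ((2*μ)*R)^b :=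
              Real.rpow_le_rpow (le_trans hd.le (le_max_left _ _)) h1 hb.le
          _ = (2*μ)^b * R^b := Real.mul_rpow h2μ0.le hR0.le
      have e2 : max e (min (2*(μ*R)) (4*diam Ω)) ^ θ ≤ (2*μ)^|θ| * e^θ :=
        bracket_rpow_le θ he h2μ1 (le_max_left _ _)
          (max_le (le_mul_of_one_le_left he.le h2μ1)
            (ht'le.trans (mul_le_mul_of_nonneg_left hRe h2μ0.le)))
      have e3 : (min (2*(μ*R)) (4*diam Ω)) ^ (N:ℝ) ≤ (2*μ)^(N:ℝ) * R^(N:ℝ) := by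
        calc (min (2*(μ*R)) (4*diam Ω)) ^ (N:ℝ) ≤ ((2*μ)*R) ^ (N:ℝ) :=
              Real.rpow_le_rpow ht'0.le ht'le hn0.le
          _ = _ := Real.mul_rpow h2μ0.le hR0.le
      have hCsplit : (2*μ) ^ (b+|θ|+(N:ℝ)) = (2*μ)^b * (2*μ)^|θ| * (2*μ)^(N:ℝ) := by
        rw [Real.rpow_add h2μ0, Real.rpow_add h2μ0]
      have hRcomb : R^b * R^(N:ℝ) = R^(b+(N:ℝ)) := (Real.rpow_add hR0 _ _).symm
      calc c₂ * (max d (min (2*(μ*R)) (4*diam Ω)) ^ b *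
            max e (min (2*(μ*R)) (4*diam Ω)) ^ θ * (min (2*(μ*R)) (4*diam Ω)) ^ (N:ℝ))
          ≤ c₂ * (((2*μ)^b * R^b) * ((2*μ)^|θ| * e^θ) * ((2*μ)^(N:ℝ) * R^(N:ℝ))) := by
            apply mul_le_mul_of_nonneg_left ?_ hc₂.le
            apply hmul3 _ _ _ _ _ _ ?_ ?_ ?_ e1 e2 e3
            · exact Real.rpow_nonneg (le_trans hd.le (le_max_left _ _)) b
            · exact Real.rpow_nonneg (le_trans he.le (le_max_left _ _)) θ
            · exact Real.rpow_nonneg ht'0.le _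
        _ = c₂ * (2*μ)^(b+|θ|+(N:ℝ)) * (R^(b+(N:ℝ)) * e^θ) := by
            rw [hCsplit, ← hRcomb]; ring
        _ = C'' * (s ^ ((b+(N:ℝ))/(N:ℝ)) * (e ^ θ * e ^ (α*(b+(N:ℝ))/(N:ℝ)))) := by
            rw [hC''def, hRbn]; ring
  -- ===================== regime (iv) =====================
  · intro h1
    have hbase := hREG3 ((4*diam Ω) ^ ((N:ℝ)-α))
      (Real.rpow_le_rpow he.le (heD.trans (by linarith only [hD0])) hnα.le) le_rfl
    constructor
    · refine le_trans hbase.1 (measure_mono ?_)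
      intro y hy
      obtain ⟨hyΩ, hyx, hley⟩ := hy
      exact ⟨hyΩ, hyx, hley.trans h1⟩
    · have hsub : quasiBall N α σ Ω S x s ⊆ ball x (4*diam Ω) ∩ Ω := by
        intro y hy
        obtain ⟨hyΩ, -, -⟩ := hy
        refine ⟨mem_ball.2 ?_, hyΩ⟩
        have h9 := hdistD y (subset_closure hyΩ) x (subset_closure hx)
        linarith only [h9, hD0]
      have hu := (hω x hx (4*diam Ω) h4D le_rfl).2
      rw [← hd_def, ← he_def] at hu
      refine le_trans (measure_mono hsub) (le_trans hu (ENNReal.ofReal_le_ofReal ?_))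
      rw [max_eq_right (hdD.trans (by linarith only [hD0])), max_eq_right (heD.trans (by linarith only [hD0]))]
      have hpow : ((4*diam Ω) ^ ((N:ℝ)-α)) ^ ((b+θ+(N:ℝ))/((N:ℝ)-α))
          = (4*diam Ω) ^ (b+θ+(N:ℝ)) := by
        rw [← Real.rpow_mul h4D.le,
          show ((N:ℝ)-α) * ((b+θ+(N:ℝ))/((N:ℝ)-α)) = b+θ+(N:ℝ) from by
            field_simp]
      rw [hpow, Real.rpow_add h4D, Real.rpow_add h4D]
      have hX : (0:ℝ) ≤ (4*diam Ω)^b * (4*diam Ω)^θ * (4*diam Ω)^(N:ℝ) := by positivity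
      exact mul_le_mul_of_nonneg_right hC''ge hX
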